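/- Let X ∈ ℝ^{n×d}, y ∈ ℝⁿ, β* ∈ ℝ^d with Xβ* = y, and L(β) = (1/(4n))·‖Xβ − y‖₂². Let Ψ : ℝ^d → ℝ be twice continuously differentiable and convex, and let β : [0,∞) → ℝ^d be continuous with β(0) = β₀ such that t ↦ ∇Ψ(β(t)) is differentiable with derivative −∇L(β(t)). Then for every t > 0, L(β(t)) ≤ D_Ψ(β*, β₀)/t. -/

import Mathlib

set_option maxHeartbeats 1000000

open Set Filter intervalIntegral Matrix

local notation "⟪" x ", " y "⟫" => @inner ℝ _ _ x y

lemma grad_ineq {d : ℕ} {Ψ : EuclideanSpace ℝ (Fin d) → ℝ}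
    (hΨ : Differentiable ℝ Ψ) (hconv : ConvexOn ℝ Set.univ Ψ)
    (a b : EuclideanSpace ℝ (Fin d)) :
    Ψ a + ⟪gradient Ψ a, b - a⟫ ≤ Ψ b := by
  set φ : ℝ → ℝ := fun τ => Ψ (τ • (b - a) + a) with hφ
  have hφconv : ConvexOn ℝ Set.univ φ := by
    have := hconv.comp_affineMap (AffineMap.lineMap a b)
    simpa [φ, Function.comp_def, AffineMap.lineMap_apply] using this
  have hc : HasDerivAt (fun τ : ℝ => τ • (b - a) + a) (b - a) 0 := by
    simpa using ((hasDerivAt_id (0:ℝ)).smul_const (b - a)).add_const a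
  have hF : HasFDerivAt Ψ ((InnerProductSpace.toDual ℝ _) (gradient Ψ a)) a :=
    hasGradientAt_iff_hasFDerivAt.1 (hΨ a).hasGradientAt
  have hF' : HasFDerivAt Ψ ((InnerProductSpace.toDual ℝ _) (gradient Ψ a))
      ((0:ℝ) • (b - a) + a) := by simpa using hF
  have hφd : HasDerivAt φ ⟪gradient Ψ a, b - a⟫ 0 := by
    have := hF'.comp_hasDerivAt 0 hc
    simp only [InnerProductSpace.toDual_apply_apply] at this
    exact this
  have h := hφconv.le_slope_of_hasDerivAt (mem_univ (0:ℝ)) (mem_univ (1:ℝ)) one_pos hφd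
  rw [slope_def_field] at h
  have h0 : φ 0 = Ψ a := by simp [φ]
  have h1 : φ 1 = Ψ b := by simp [φ]
  rw [h0, h1] at h
  simp only [sub_zero, div_one] at h
  linarith

lemma grad_mono {d : ℕ} {Ψ : EuclideanSpace ℝ (Fin d) → ℝ}
    (hΨ : Differentiable ℝ Ψ) (hconv : ConvexOn ℝ Set.univ Ψ)
    (a b : EuclideanSpace ℝ (Fin d)) :
    0 ≤ ⟪gradient Ψ b - gradient Ψ a, b - a⟫ := by
  have h1 := grad_ineq hΨ hconv a b
  have h2 := grad_ineq hΨ hconv b a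
  simp only [inner_sub_left, inner_sub_right] at *
  linarith

section setup
variable {n d : ℕ} (X : Matrix (Fin n) (Fin d) ℝ)

noncomputable def Amap : EuclideanSpace ℝ (Fin d) →L[ℝ] EuclideanSpace ℝ (Fin n) :=
  LinearMap.toContinuousLinearMap (Matrix.toEuclideanLin X)

noncomputable def Atmap : EuclideanSpace ℝ (Fin n) →L[ℝ] EuclideanSpace ℝ (Fin d) :=
  LinearMap.toContinuousLinearMap (Matrix.toEuclideanLin Xᵀ)

lemma Amap_apply (v : EuclideanSpace ℝ (Fin d)) (i : Fin n) : Amap X v i = X.mulVec v i := rfl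

lemma adj_eq (u : EuclideanSpace ℝ (Fin d)) (v : EuclideanSpace ℝ (Fin n)) :
    ⟪Amap X u, v⟫ = ⟪u, Atmap X v⟫ := by
  have h : (Xᵀ : Matrix (Fin d) (Fin n) ℝ) = X.conjTranspose := by
    ext i j; simp [Matrix.conjTranspose_apply]
  simp only [Amap, Atmap, LinearMap.coe_toContinuousLinearMap', h,
    Matrix.toEuclideanLin_conjTranspose_eq_adjoint]
  rw [LinearMap.adjoint_inner_right]
end setup

section gradL
variable {n d : ℕ} (hn : 0 < n) (X : Matrix (Fin n) (Fin d) ℝ) (y : Fin n → ℝ)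

noncomputable def yE (y : Fin n → ℝ) : EuclideanSpace ℝ (Fin n) := (WithLp.equiv 2 _).symm y

lemma inner_self_eq_sum (w : EuclideanSpace ℝ (Fin n)) : ⟪w, w⟫ = ∑ i, (w i)^2 := by
  simp only [PiLp.inner_apply, RCLike.inner_apply, conj_trivial, sq]

lemma L_eq (b : EuclideanSpace ℝ (Fin d)) :
    (1 / (4 * (n : ℝ))) * ∑ i, (X.mulVec b i - y i) ^ 2
      = (1 / (4 * (n : ℝ))) * ⟪Amap X b - yE y, Amap X b - yE y⟫ := by
  rw [inner_self_eq_sum]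
  congr 1

include hn in
lemma L_hasGradient (b : EuclideanSpace ℝ (Fin d)) :
    HasGradientAt (fun b : EuclideanSpace ℝ (Fin d) => (1 / (4 * (n : ℝ))) * ∑ i, (X.mulVec b i - y i) ^ 2)
      ((1/(2*(n:ℝ))) • Atmap X (Amap X b - yE y)) b := by
  have hfun : (fun b : EuclideanSpace ℝ (Fin d) => (1 / (4 * (n : ℝ))) * ∑ i, (X.mulVec b i - y i) ^ 2)
      = fun b => (1 / (4 * (n : ℝ))) * ⟪Amap X b - yE y, Amap X b - yE y⟫ :=
    funext fun b => L_eq X y b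
  rw [hfun, hasGradientAt_iff_hasFDerivAt]
  have hsub : HasFDerivAt (fun b => Amap X b - yE y) (Amap X) b :=
    (Amap X).hasFDerivAt.sub_const (yE y)
  have hq := (hsub.inner ℝ hsub).const_mul (1 / (4 * (n : ℝ)))
  refine hq.congr_fderiv ?_
  symm
  ext v
  have hnn : (0:ℝ) < (n:ℝ) := by exact_mod_cast hn
  simp only [InnerProductSpace.toDual_apply_apply, ContinuousLinearMap.coe_smul',
    Pi.smul_apply, ContinuousLinearMap.coe_comp', Function.comp_apply,
    ContinuousLinearMap.prod_apply, fderivInnerCLM_apply, smul_eq_mul]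
  rw [real_inner_smul_left]
  have h1 : ⟪Atmap X (Amap X b - yE y), v⟫ = ⟪Amap X b - yE y, Amap X v⟫ := by
    rw [real_inner_comm, ← adj_eq, real_inner_comm]
  rw [h1]
  have h2 : ⟪Amap X v, Amap X b - yE y⟫ = ⟪Amap X b - yE y, Amap X v⟫ := real_inner_comm _ _
  rw [h2]
  field_simp
  ring
end gradL

theorem stmt_13 {n d : ℕ} (hn : 0 < n) (X : Matrix (Fin n) (Fin d) ℝ) (y : Fin n → ℝ)
    (βs : EuclideanSpace ℝ (Fin d)) (hβs : X.mulVec βs = y)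
    (L : EuclideanSpace ℝ (Fin d) → ℝ)
    (hLdef : ∀ b, L b = (1 / (4 * (n : ℝ))) * ∑ i, (X.mulVec b i - y i) ^ 2)
    (Ψ : EuclideanSpace ℝ (Fin d) → ℝ) (hΨ : ContDiff ℝ 2 Ψ)
    (hconv : ConvexOn ℝ Set.univ Ψ)
    (β : ℝ → EuclideanSpace ℝ (Fin d)) (β₀ : EuclideanSpace ℝ (Fin d))
    (hβ0 : β 0 = β₀) (hcont : ContinuousOn β (Set.Ici 0))
    (hflow : ∀ t ∈ Set.Ici (0 : ℝ),
      HasDerivWithinAt (fun s => gradient Ψ (β s)) (-(gradient L (β t))) (Set.Ici 0) t) :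
    ∀ t : ℝ, 0 < t →
      L (β t) ≤ (Ψ βs - Ψ β₀ - (inner ℝ (gradient Ψ β₀) (βs - β₀) : ℝ)) / t := by
  intro t ht
  have hnn : (0:ℝ) < (n:ℝ) := by exact_mod_cast hn
  have hΨd : Differentiable ℝ Ψ := hΨ.differentiable (by norm_num)
  set βe : ℝ → EuclideanSpace ℝ (Fin d) := fun s => β (max s 0) with hβedef
  have hβe_cont : Continuous βe :=
    hcont.comp_continuous (continuous_id.max continuous_const) (fun x => Set.mem_Ici.mpr (le_max_right _ _))
  have hβe_eq : ∀ s : ℝ, 0 ≤ s → βe s = β s := fun s hs => by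
    simp [βe, max_eq_left hs]
  set g : ℝ → EuclideanSpace ℝ (Fin n) := fun s => Amap X (βe s) - yE y with hgdef
  have hg_cont : Continuous g := ((Amap X).continuous.comp hβe_cont).sub continuous_const
  set z : ℝ → EuclideanSpace ℝ (Fin d) := fun s => gradient Ψ (βe s) with hzdef
  have hgrad_cont : Continuous (gradient Ψ) := by
    have h1 : Continuous (fderiv ℝ Ψ) := hΨ.continuous_fderiv (by norm_num)
    exact (LinearIsometryEquiv.continuous _).comp h1
  have hz_cont : Continuous z := hgrad_cont.comp hβe_cont
  have hgradL : ∀ b, gradient L b = (1/(2*(n:ℝ))) • Atmap X (Amap X b - yE y) := by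
    intro b
    have hfun : L = fun b : EuclideanSpace ℝ (Fin d) =>
        (1 / (4 * (n : ℝ))) * ∑ i, (X.mulVec b i - y i) ^ 2 := funext hLdef
    rw [hfun]
    exact (L_hasGradient hn X y b).gradient
  have hzd : ∀ s ∈ Set.Ici (0:ℝ),
      HasDerivWithinAt z (-((1/(2*(n:ℝ))) • Atmap X (g s))) (Set.Ici 0) s := by
    intro s hs
    have h := hflow s hs
    have heq : -(gradient L (β s)) = -((1/(2*(n:ℝ))) • Atmap X (g s)) := by
      simp only [hgradL, hgdef]
      rw [hβe_eq s hs]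
    rw [heq] at h
    exact h.congr (fun x hx => by show gradient Ψ (βe x) = _; rw [hβe_eq x hx])
      (by show gradient Ψ (βe s) = _; rw [hβe_eq s hs])
  set c : ℝ := -(1/(2*(n:ℝ))) with hcdef
  set w : ℝ → EuclideanSpace ℝ (Fin n) := fun s => c • ∫ u in (0:ℝ)..s, g u with hwdef
  have hw_deriv : ∀ s, HasDerivAt w (c • g s) s := by
    intro s
    exact (intervalIntegral.integral_hasDerivAt_right
      (hg_cont.intervalIntegrable _ _)
      (hg_cont.stronglyMeasurableAtFilter _ _) hg_cont.continuousAt).const_smul c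
  have hcgint : ∀ (a b : ℝ), IntervalIntegrable (fun x => c • g x) MeasureTheory.volume a b :=
    fun a b => (hg_cont.const_smul c).intervalIntegrable a b
  have hzw : ∀ u s : ℝ, 0 ≤ u → u ≤ s → z s - z u = Atmap X (w s - w u) := by
    intro u s hu hus
    have hftc : ∫ x in u..s, -((1/(2*(n:ℝ))) • Atmap X (g x)) = z s - z u := by
      apply intervalIntegral.integral_eq_sub_of_hasDeriv_right_of_le hus
        hz_cont.continuousOn
      · intro x hx
        exact (hzd x (hu.trans hx.1.le)).mono
          (fun r hr => (hu.trans hx.1.le).trans (le_of_lt hr))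
      · exact (((Atmap X).continuous.comp hg_cont).const_smul (1/(2*(n:ℝ)))).neg.intervalIntegrable _ _
    have heq1 : (fun x => -((1/(2*(n:ℝ))) • Atmap X (g x)))
        = fun x => Atmap X (c • g x) := by
      funext x
      rw [hcdef, (Atmap X).map_smul]
      simp [neg_smul]
    rw [heq1] at hftc
    rw [(Atmap X).intervalIntegral_comp_comm (hcgint u s)] at hftc
    rw [← hftc]
    congr 1
    simp only [hwdef]
    rw [← smul_sub, intervalIntegral.integral_interval_sub_left
      (hg_cont.intervalIntegrable _ _) (hg_cont.intervalIntegrable _ _),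
      intervalIntegral.integral_smul]
  have hmono : ∀ u s : ℝ, 0 ≤ u → u ≤ s → 0 ≤ ⟪g s - g u, w s - w u⟫ := by
    intro u s hu hus
    have h1 : g s - g u = Amap X (βe s - βe u) := by
      simp only [hgdef, map_sub]
      abel
    rw [h1, adj_eq, ← hzw u s hu hus, real_inner_comm]
    have := grad_mono hΨd hconv (βe u) (βe s)
    simpa [hzdef] using this
  have hw_cont : Continuous w := by
    rw [continuous_iff_continuousAt]
    exact fun s => (hw_deriv s).continuousAt
  have hcne : c < 0 := by
    have h0 : 0 < 1/(2*(n:ℝ)) := by positivity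
    rw [hcdef]
    linarith
  have hgdec : ∀ u s : ℝ, 0 ≤ u → u ≤ s → ‖g s‖ ≤ ‖g u‖ := by
    intro u s hu hus
    -- Step 1: for each h > 0, r ↦ ‖w (r+h) - w r‖ is antitone on [0,∞)
    have claim1 : ∀ hh : ℝ, 0 < hh → ‖w (s+hh) - w s‖ ≤ ‖w (u+hh) - w u‖ := by
      intro hh hhh
      set W : ℝ → EuclideanSpace ℝ (Fin n) := fun r => w (r+hh) - w r with hWdef
      have hW : ∀ r, HasDerivAt W (c • g (r+hh) - c • g r) r := by
        intro r
        have h1 : HasDerivAt (fun r : ℝ => w (r+hh)) (c • g (r+hh)) r := by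
          have := (hw_deriv (r+hh)).scomp r ((hasDerivAt_id r).add_const hh)
          simp at this
          exact this
        exact h1.sub (hw_deriv r)
      set ψ : ℝ → ℝ := fun r => ⟪W r, W r⟫ with hψdef
      have hψ : ∀ r, HasDerivAt ψ (2 * ⟪c • g (r+hh) - c • g r, W r⟫) r := by
        intro r
        have := (hW r).inner ℝ (hW r)
        refine this.congr_deriv ?_
        rw [real_inner_comm]
        ring
      have hψd_cont : Continuous fun r => 2 * ⟪c • g (r+hh) - c • g r, W r⟫ := by
        apply continuous_const.mul
        apply Continuous.inner
        · exact ((hg_cont.comp (continuous_id.add continuous_const)).const_smul c).sub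
            (hg_cont.const_smul c)
        · exact (hw_cont.comp (continuous_id.add continuous_const)).sub hw_cont
      have hftc2 : ∫ x in u..s, 2 * ⟪c • g (x+hh) - c • g x, W x⟫ = ψ s - ψ u := by
        apply intervalIntegral.integral_eq_sub_of_hasDerivAt_of_le hus
          (((hw_cont.comp (continuous_id.add continuous_const)).sub hw_cont).inner
            ((hw_cont.comp (continuous_id.add continuous_const)).sub hw_cont)).continuousOn
          (fun x hx => hψ x)
          (hψd_cont.intervalIntegrable _ _)
      have hle : ψ s ≤ ψ u := by
        have hnonpos : ∫ x in u..s, 2 * ⟪c • g (x+hh) - c • g x, W x⟫ ≤ 0 := by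
          have h0 : (0:ℝ) = ∫ _x in u..s, (0:ℝ) := by simp
          rw [h0]
          apply intervalIntegral.integral_mono_on hus (hψd_cont.intervalIntegrable _ _)
            intervalIntegrable_const
          intro x hx
          have hx0 : 0 ≤ x := hu.trans hx.1
          have hm := hmono x (x+hh) hx0 (by linarith)
          have hsm : c • g (x+hh) - c • g x = c • (g (x+hh) - g x) :=
            (smul_sub c (g (x+hh)) (g x)).symm
          rw [hsm, real_inner_smul_left]
          nlinarith
        linarith [hftc2.symm, hnonpos]
      have : ‖W s‖^2 ≤ ‖W u‖^2 := by
        rw [← real_inner_self_eq_norm_sq, ← real_inner_self_eq_norm_sq]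
        exact hle
      nlinarith [norm_nonneg (W s), norm_nonneg (W u)]
    -- Step 2: take hh → 0⁺
    have hslope : ∀ r : ℝ, Tendsto (fun hh : ℝ => ‖hh⁻¹ • (w (r+hh) - w r)‖)
        (nhdsWithin 0 (Ioi 0)) (nhds ‖c • g r‖) := by
      intro r
      have h1 := hasDerivAt_iff_tendsto_slope_zero.mp (hw_deriv r)
      have h2 : Tendsto (fun hh : ℝ => ‖hh⁻¹ • (w (r+hh) - w r)‖)
          (nhdsWithin 0 {(0:ℝ)}ᶜ) (nhds ‖c • g r‖) := (continuous_norm.tendsto _).comp h1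
      exact h2.mono_left (nhdsWithin_mono 0 (fun x hx => ne_of_gt hx))
    have hfin : ‖c • g s‖ ≤ ‖c • g u‖ := by
      apply le_of_tendsto_of_tendsto (hslope s) (hslope u)
      apply Filter.eventually_of_mem self_mem_nhdsWithin
      intro hh hhh
      simp only [norm_smul]
      exact mul_le_mul_of_nonneg_left (claim1 hh hhh) (norm_nonneg _)
    rw [norm_smul, norm_smul] at hfin
    have hcpos : 0 < ‖c‖ := by
      rw [norm_pos_iff]
      exact ne_of_lt hcne
    exact le_of_mul_le_mul_left hfin hcpos
  set V : ℝ → ℝ := fun s => Ψ βs - Ψ (βe s) - ⟪z s, βs - βe s⟫ with hVdef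
  have hV_cont : Continuous V := by
    apply (continuous_const.sub (hΨ.continuous.comp hβe_cont)).sub
    exact hz_cont.inner (continuous_const.sub hβe_cont)
  have hVbounds : ∀ u s : ℝ,
      ⟪z u - z s, βs - βe u⟫ ≤ V s - V u ∧ V s - V u ≤ ⟪z u - z s, βs - βe s⟫ := by
    intro u s
    have h1 := grad_ineq hΨd hconv (βe u) (βe s)
    have h2 := grad_ineq hΨd hconv (βe s) (βe u)
    simp only [hVdef, hzdef, inner_sub_left, inner_sub_right] at *
    constructor <;> linarith
  have hAβs : Amap X βs = yE y := by
    ext i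
    have h1 : Amap X βs i = X.mulVec βs i := rfl
    rw [h1, hβs]
    rfl
  have hVd : ∀ u ∈ Set.Ici (0:ℝ),
      HasDerivWithinAt V (-((1/(2*(n:ℝ))) * ⟪g u, g u⟫)) (Set.Ici 0) u := by
    intro u hu
    rw [hasDerivWithinAt_iff_tendsto_slope]
    set A : ℝ → ℝ := fun s => ⟪-(slope z u s), βs - βe u⟫ with hAdef
    set B : ℝ → ℝ := fun s => ⟪-(slope z u s), βs - βe s⟫ with hBdef
    have hc0 : ⟪(1/(2*(n:ℝ))) • Atmap X (g u), βs - βe u⟫ = -((1/(2*(n:ℝ))) * ⟪g u, g u⟫) := by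
      rw [real_inner_smul_left]
      have h1 : ⟪Atmap X (g u), βs - βe u⟫ = ⟪g u, Amap X (βs - βe u)⟫ := by
        rw [real_inner_comm, ← adj_eq, real_inner_comm]
      have h2 : Amap X (βs - βe u) = -(g u) := by
        rw [map_sub, hAβs]
        simp only [hgdef]
        abel
      rw [h1, h2, inner_neg_right]
      ring
    have hzslope : Tendsto (slope z u) (nhdsWithin u (Set.Ici 0 \ {u}))
        (nhds (-((1/(2*(n:ℝ))) • Atmap X (g u)))) :=
      hasDerivWithinAt_iff_tendsto_slope.mp (hzd u hu)
    have hβe_tend : Tendsto (fun s => βs - βe s) (nhdsWithin u (Set.Ici 0 \ {u}))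
        (nhds (βs - βe u)) :=
      (tendsto_const_nhds.sub (hβe_cont.tendsto u)).mono_left nhdsWithin_le_nhds
    have hA : Tendsto A (nhdsWithin u (Set.Ici 0 \ {u}))
        (nhds (-((1/(2*(n:ℝ))) * ⟪g u, g u⟫))) := by
      have h := Filter.Tendsto.inner (𝕜 := ℝ) hzslope.neg (tendsto_const_nhds (x := βs - βe u))
      rw [neg_neg, hc0] at h
      exact h
    have hB : Tendsto B (nhdsWithin u (Set.Ici 0 \ {u}))
        (nhds (-((1/(2*(n:ℝ))) * ⟪g u, g u⟫))) := by
      have h := Filter.Tendsto.inner (𝕜 := ℝ) hzslope.neg hβe_tend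
      rw [neg_neg, hc0] at h
      exact h
    have key : ∀ s ∈ Set.Ici (0:ℝ) \ {u},
        min (A s) (B s) ≤ slope V u s ∧ slope V u s ≤ max (A s) (B s) := by
      intro s hs
      have h1 := (hVbounds u s).1
      have h2 := (hVbounds u s).2
      have hsl : slope V u s = (s - u)⁻¹ * (V s - V u) := by
        rw [slope_def_field, div_eq_inv_mul]
      have hAs : A s = (s - u)⁻¹ * ⟪z u - z s, βs - βe u⟫ := by
        simp only [hAdef, slope_def_module, ← smul_neg, neg_sub, real_inner_smul_left]
      have hBs : B s = (s - u)⁻¹ * ⟪z u - z s, βs - βe s⟫ := by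
        simp only [hBdef, slope_def_module, ← smul_neg, neg_sub, real_inner_smul_left]
      have hne : s ≠ u := hs.2
      rcases hne.lt_or_gt with hlt | hlt
      · have hinv : (s - u)⁻¹ ≤ 0 := inv_nonpos.mpr (by linarith)
        constructor
        · refine le_trans (min_le_right _ _) ?_
          rw [hBs, hsl]
          exact mul_le_mul_of_nonpos_left h2 hinv
        · refine le_trans ?_ (le_max_left _ _)
          rw [hAs, hsl]
          exact mul_le_mul_of_nonpos_left h1 hinv
      · have hinv : (0:ℝ) ≤ (s - u)⁻¹ := inv_nonneg.mpr (by linarith)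
        constructor
        · refine le_trans (min_le_left _ _) ?_
          rw [hAs, hsl]
          exact mul_le_mul_of_nonneg_left h1 hinv
        · refine le_trans ?_ (le_max_right _ _)
          rw [hBs, hsl]
          exact mul_le_mul_of_nonneg_left h2 hinv
    have hmin : Tendsto (fun s => min (A s) (B s)) (nhdsWithin u (Set.Ici 0 \ {u}))
        (nhds (-((1/(2*(n:ℝ))) * ⟪g u, g u⟫))) := by
      have := hA.min hB
      simpa using this
    have hmax : Tendsto (fun s => max (A s) (B s)) (nhdsWithin u (Set.Ici 0 \ {u}))
        (nhds (-((1/(2*(n:ℝ))) * ⟪g u, g u⟫))) := by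
      have := hA.max hB
      simpa using this
    exact tendsto_of_tendsto_of_tendsto_of_le_of_le' hmin hmax
      (Filter.eventually_of_mem self_mem_nhdsWithin fun s hs => (key s hs).1)
      (Filter.eventually_of_mem self_mem_nhdsWithin fun s hs => (key s hs).2)
  have hVt0 : 0 ≤ V t := by
    have := grad_ineq hΨd hconv (βe t) βs
    simp only [hVdef, hzdef]
    linarith
  have hFTC : ∫ s in (0:ℝ)..t, -((1/(2*(n:ℝ))) * ⟪g s, g s⟫) = V t - V 0 := by
    apply intervalIntegral.integral_eq_sub_of_hasDeriv_right_of_le ht.le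
    · exact hV_cont.continuousOn
    · intro x hx
      exact (hVd x (le_of_lt hx.1)).mono (fun r hr => le_trans hx.1.le (le_of_lt hr))
    · exact ((continuous_const.mul (hg_cont.inner hg_cont)).neg).intervalIntegrable _ _
  have hLb : L (β t) = (1/(4*(n:ℝ))) * ⟪g t, g t⟫ := by
    rw [hLdef, L_eq X y]
    simp only [hgdef]
    rw [hβe_eq t ht.le]
  -- final assembly
  have hβe0 : βe 0 = β₀ := by rw [hβe_eq 0 le_rfl, hβ0]
  have hV0 : V 0 = Ψ βs - Ψ β₀ - ⟪gradient Ψ β₀, βs - β₀⟫ := by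
    simp only [hVdef, hzdef, hβe0]
  have hint1 : ∀ s ∈ Set.Icc (0:ℝ) t,
      (1/(2*(n:ℝ))) * ⟪g t, g t⟫ ≤ (1/(2*(n:ℝ))) * ⟪g s, g s⟫ := by
    intro s hs
    have h1 := hgdec s t hs.1 hs.2
    rw [real_inner_self_eq_norm_sq, real_inner_self_eq_norm_sq]
    have h2 : ‖g t‖^2 ≤ ‖g s‖^2 := by nlinarith [norm_nonneg (g t), norm_nonneg (g s)]
    have h3 : (0:ℝ) ≤ 1/(2*(n:ℝ)) := by positivity
    exact mul_le_mul_of_nonneg_left h2 h3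
  have h2 : t * ((1/(2*(n:ℝ))) * ⟪g t, g t⟫) ≤ ∫ s in (0:ℝ)..t, (1/(2*(n:ℝ))) * ⟪g s, g s⟫ := by
    have h0 : t * ((1/(2*(n:ℝ))) * ⟪g t, g t⟫)
        = ∫ _s in (0:ℝ)..t, (1/(2*(n:ℝ))) * ⟪g t, g t⟫ := by
      rw [intervalIntegral.integral_const, smul_eq_mul, sub_zero]
    rw [h0]
    exact intervalIntegral.integral_mono_on ht.le intervalIntegrable_const
      ((continuous_const.mul (hg_cont.inner hg_cont)).intervalIntegrable _ _) hint1
  have h3 : (∫ s in (0:ℝ)..t, (1/(2*(n:ℝ))) * ⟪g s, g s⟫) = V 0 - V t := by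
    have h4 := hFTC
    rw [intervalIntegral.integral_neg] at h4
    linarith
  have h5 : t * ((1/(2*(n:ℝ))) * ⟪g t, g t⟫) ≤ V 0 := by
    rw [h3] at h2
    exact h2.trans (sub_le_self _ hVt0)
  rw [← hV0, le_div_iff₀ ht, hLb]
  have h6 : 1/(4*(n:ℝ)) * ⟪g t, g t⟫ * t = (t * ((1/(2*(n:ℝ))) * ⟪g t, g t⟫))/2 := by
    field_simp
    ring
  rw [h6]
  have h7 : (0:ℝ) ≤ ⟪g t, g t⟫ := real_inner_self_nonneg
  have h8 : (0:ℝ) ≤ t * ((1/(2*(n:ℝ))) * ⟪g t, g t⟫) :=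
    mul_nonneg ht.le (mul_nonneg (by positivity) h7)
  linarith
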